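/- If 0 < r ≤ (2 - √3)/(2√3), then the annulus A_r admits a proper 3-coloring: there exists c : A_r → Fin 3 such that any two points of A_r at Euclidean distance 1 receive distinct colors. -/

import Mathlib

def annulus (r : ℝ) : Set ℂ := {p : ℂ | 1 / 2 - r ≤ ‖p‖ ∧ ‖p‖ ≤ 1 / 2 + r}

open Real Complex

noncomputable def annColor (z : ℂ) : Fin 3 :=
  if z.arg ≤ -(π/3) then 0 else if z.arg ≤ π/3 then 1 else 2

lemma cos_rule (p q : ℂ) :
    ‖p - q‖^2 = ‖p‖^2 + ‖q‖^2 - 2*‖p‖*‖q‖*Real.cos (p.arg - q.arg) := by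
  have hre : (p * (starRingEnd ℂ) q).re = ‖p‖ * ‖q‖ * Real.cos (p.arg - q.arg) := by
    rw [Complex.mul_re, Complex.conj_re, Complex.conj_im, Real.cos_sub,
      ← Complex.norm_mul_cos_arg p, ← Complex.norm_mul_sin_arg p,
      ← Complex.norm_mul_cos_arg q, ← Complex.norm_mul_sin_arg q]
    ring
  have h1 : ‖p - q‖^2 = Complex.normSq (p - q) := by
    rw [Complex.sq_norm]
  rw [h1, Complex.normSq_sub, hre]
  simp [Complex.normSq_eq_norm_sq]
  ring

lemma angle_close {p q : ℂ} (h : annColor p = annColor q) :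
    |p.arg - q.arg| < 2 * π / 3 := by
  have hp1 := Complex.neg_pi_lt_arg p
  have hp2 := Complex.arg_le_pi p
  have hq1 := Complex.neg_pi_lt_arg q
  have hq2 := Complex.arg_le_pi q
  have hpi := Real.pi_pos
  unfold annColor at h
  rw [abs_lt]
  split_ifs at h with h1 h2 h3 h3 h4 h4 <;>
    first
      | (constructor <;> linarith)
      | simp at h

theorem annulus_three_colorable (r : ℝ) (hr0 : 0 < r)
    (hr1 : r ≤ (2 - Real.sqrt 3) / (2 * Real.sqrt 3)) :
    ∃ c : annulus r → Fin 3,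
      ∀ p q : annulus r, ‖(p : ℂ) - (q : ℂ)‖ = 1 → c p ≠ c q := by
  have hs : (0:ℝ) < Real.sqrt 3 := Real.sqrt_pos.mpr (by norm_num)
  have hs2 : Real.sqrt 3 ^ 2 = 3 := Real.sq_sqrt (by norm_num)
  have hrM : Real.sqrt 3 * (1/2 + r) ≤ 1 := by
    have h2 : r * (2 * Real.sqrt 3) ≤ 2 - Real.sqrt 3 := by
      calc r * (2 * Real.sqrt 3) ≤ ((2 - Real.sqrt 3) / (2 * Real.sqrt 3)) * (2 * Real.sqrt 3) := by
            apply mul_le_mul_of_nonneg_right hr1 (by positivity)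
        _ = 2 - Real.sqrt 3 := by field_simp
    nlinarith
  have hM2 : 3 * (1/2 + r)^2 ≤ 1 := by nlinarith
  have hr_half : r < 1/2 := by nlinarith
  refine ⟨fun p => annColor (p : ℂ), fun p q hdist hc => ?_⟩
  have hang := angle_close hc
  have hcr := cos_rule (p : ℂ) (q : ℂ)
  have hpi := Real.pi_pos
  -- cos bound
  have hcos : Real.cos ((p:ℂ).arg - (q:ℂ).arg) > -(1/2) := by
    have habs : Real.cos ((p:ℂ).arg - (q:ℂ).arg) = Real.cos |(p:ℂ).arg - (q:ℂ).arg| :=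
      (Real.cos_abs _).symm
    rw [habs]
    have h23 : Real.cos (2 * π / 3) = -(1/2) := by
      have : 2 * π / 3 = π - π/3 := by ring
      rw [this, Real.cos_pi_sub, Real.cos_pi_div_three]
    rw [← h23]
    exact Real.cos_lt_cos_of_nonneg_of_le_pi (abs_nonneg _) (by linarith) hang
  have hpmem := p.2
  have hqmem := q.2
  obtain ⟨hp1, hp2⟩ := hpmem
  obtain ⟨hq1, hq2⟩ := hqmem
  have hdist2 : ‖(p:ℂ) - (q:ℂ)‖^2 = 1 := by rw [hdist]; norm_num
  rw [hdist2] at hcr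
  have hp0 : (0:ℝ) < ‖(p:ℂ)‖ := by linarith
  have hq0 : (0:ℝ) < ‖(q:ℂ)‖ := by linarith
  nlinarith [mul_pos hp0 hq0, sq_nonneg (‖(p:ℂ)‖ - ‖(q:ℂ)‖),
    mul_le_mul hp2 hq2 (le_of_lt hq0) (by linarith : (0:ℝ) ≤ 1/2 + r)]
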